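/- Let Σ be a finite symmetric generating multiset of a group Γ such that the Cayley graph Cay(Γ,Σ) is not bipartite, and let l be the (odd) length of the shortest odd cycle in Cay(Γ,Σ), i.e., the least odd l such that some product of l elements of Σ equals the identity. Then for every finite-index normal subgroup N of Γ, the smallest eigenvalue of the normalized adjacency matrix of Cay(Γ/N, Σ_N), where Σ_N is the image multiset of Σ in Γ/N, is at least (2/|Σ|^l − 1)^{1/l} (the real l-th root, l being odd), which is a real number strictly greater than −1. -/

import Mathlib

attribute [local instance] Classical.propDecidable

/-- `l` is the length of the shortest odd cycle in `Cay(Γ, S)`: the least odd `l`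
such that some product of `l` elements of `S` equals the identity. -/
def ShortestOddCycle {G : Type*} [Group G] (S : Multiset G) (l : ℕ) : Prop :=
  Odd l ∧ (∃ L : List G, (∀ g ∈ L, g ∈ S) ∧ L.length = l ∧ L.prod = 1) ∧
    ∀ l' : ℕ, Odd l' → (∃ L : List G, (∀ g ∈ L, g ∈ S) ∧ L.length = l' ∧ L.prod = 1) → l ≤ l'

/-- The `(x, y)` entry of the normalized adjacency matrix of the Cayley graph of
`Γ ⧸ K` with respect to the image multiset of `S`: the total multiplicity in `S`
of elements `s` with `x · s = y`, divided by `|S|`. -/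
noncomputable def quotAdj {G : Type*} [Group G] (S : Multiset G) (K : Subgroup G)
    (x y : G ⧸ K) : ℝ :=
  ((S.filter (fun s => ∀ g : G, (QuotientGroup.mk g : G ⧸ K) = x →
      (QuotientGroup.mk (g * s) : G ⧸ K) = y)).card : ℝ) / (Multiset.card S : ℝ)

lemma sum_filter_card_eq {α β : Type*} [Fintype β] (S : Multiset α) (f : α → β)
    (D : ∀ b : β, DecidablePred (fun s => f s = b)) :
    ∑ b : β, Multiset.card (@Multiset.filter α (fun s => f s = b) (D b) S)
      = Multiset.card S := by
  induction S using Multiset.induction with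
  | empty => simp
  | cons s T ih =>
    simp only [Multiset.filter_cons, Multiset.card_add, Finset.sum_add_distrib, ih,
      Multiset.card_cons]
    rw [add_comm]
    congr 1
    simp only [apply_ite Multiset.card, Multiset.card_singleton, Multiset.card_zero,
      Finset.sum_boole]
    rw [Nat.cast_id, Finset.card_eq_one]
    exact ⟨f s, by ext x; simp [eq_comm]⟩

lemma quotAdj_eq {G : Type*} [Group G] (S : Multiset G) (K : Subgroup G) [K.Normal] (x y : G ⧸ K) :
    quotAdj S K x y =
      ((S.filter (fun s => x * (QuotientGroup.mk s : G ⧸ K) = y)).card : ℝ) /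
        (Multiset.card S : ℝ) := by
  have hfil : Multiset.filter (fun s => ∀ g : G, (QuotientGroup.mk g : G ⧸ K) = x →
      (QuotientGroup.mk (g * s) : G ⧸ K) = y) S
      = Multiset.filter (fun s => x * (QuotientGroup.mk s : G ⧸ K) = y) S := by
    apply Multiset.filter_congr
    intro s _
    obtain ⟨g₀, rfl⟩ := QuotientGroup.mk_surjective x
    constructor
    · intro h
      rw [← QuotientGroup.mk_mul]
      exact h g₀ rfl
    · intro h g hg
      rw [QuotientGroup.mk_mul, hg]
      exact h
  unfold quotAdj
  rw [hfil]

theorem smallest_eigenvalue_bound {G : Type*} [Group G] (S : Multiset G)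
    (hsym : S.map (fun g => g⁻¹) = S)
    (hgen : Subgroup.closure {g : G | g ∈ S} = ⊤)
    (l : ℕ) (hl : ShortestOddCycle S l)
    (N : Subgroup G) (hN : N.Normal) (hfi : N.FiniteIndex) :
    ∀ x : ℝ, x ^ l = 2 / (Multiset.card S : ℝ) ^ l - 1 →
      -1 < x ∧
        ∀ (lam : ℝ) (v : G ⧸ N → ℝ), v ≠ 0 →
          (∀ z : G ⧸ N, (∑ᶠ y : G ⧸ N, quotAdj S N z y * v y) = lam * v z) →
          x ≤ lam := by
  classical
  obtain ⟨hodd, ⟨L, hLS, hLlen, hLprod⟩, -⟩ := hl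
  have hl0 : l ≠ 0 := by rintro rfl; exact (Nat.not_odd_iff_even.mpr Even.zero) hodd
  -- S is nonempty
  have hSne : S ≠ 0 := by
    rintro rfl
    have hLne : L ≠ [] := by
      intro h; rw [h] at hLlen; exact hl0 hLlen.symm
    obtain ⟨g, hg⟩ := List.exists_mem_of_ne_nil L hLne
    simpa using hLS g hg
  have hm : (0:ℝ) < (Multiset.card S : ℝ) := by
    have := Multiset.card_pos.mpr hSne
    exact_mod_cast this
  set m : ℝ := (Multiset.card S : ℝ) with hmdef
  have hml : (0:ℝ) < m ^ l := pow_pos hm l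
  intro x hx
  have hx1 : -1 < x := by
    have h1 : (-1:ℝ) ^ l < x ^ l := by
      rw [hodd.neg_one_pow, hx]
      have : (0:ℝ) < 2 / m ^ l := div_pos two_pos hml
      linarith
    exact (hodd.strictMono_pow (R := ℝ)).lt_iff_lt.mp h1
  refine ⟨hx1, ?_⟩
  intro lam v hv heig
  -- finiteness of the quotient
  haveI := hN
  haveI : Finite (G ⧸ N) := N.finite_quotient_of_finiteIndex
  haveI : Fintype (G ⧸ N) := Fintype.ofFinite _
  set A : Matrix (G ⧸ N) (G ⧸ N) ℝ := Matrix.of (quotAdj S N) with hA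
  have hApos : ∀ a b : G ⧸ N, 0 ≤ A a b := by
    intro a b
    rw [hA, Matrix.of_apply, quotAdj_eq]
    positivity
  have hArow : ∀ a : G ⧸ N, ∑ b : G ⧸ N, A a b = 1 := by
    intro a
    simp only [hA, Matrix.of_apply, quotAdj_eq]
    rw [← Finset.sum_div]
    rw [div_eq_one_iff_eq (ne_of_gt hm), hmdef]
    exact_mod_cast sum_filter_card_eq S (fun s => a * (QuotientGroup.mk s : G ⧸ N)) _
  have hAstep : ∀ (a : G ⧸ N) (s : G), s ∈ S → 1 / m ≤ A a (a * QuotientGroup.mk s) := by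
    intro a s hs
    rw [hA, Matrix.of_apply, quotAdj_eq]
    have hmem : s ∈ S.filter (fun t => a * (QuotientGroup.mk t : G ⧸ N)
        = a * QuotientGroup.mk s) := Multiset.mem_filter.mpr ⟨hs, rfl⟩
    have hc : 1 ≤ (S.filter (fun t => a * (QuotientGroup.mk t : G ⧸ N)
        = a * QuotientGroup.mk s)).card :=
      Multiset.card_pos.mpr (fun h => by rw [h] at hmem; simp at hmem)
    gcongr
    exact_mod_cast hc
  -- nonnegativity of powers
  have hPpos : ∀ (k : ℕ) (a b : G ⧸ N), 0 ≤ (A ^ k) a b := by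
    intro k
    induction k with
    | zero => intro a b; rw [pow_zero, Matrix.one_apply]; positivity
    | succ k ih =>
      intro a b
      rw [pow_succ, Matrix.mul_apply]
      exact Finset.sum_nonneg fun c _ => mul_nonneg (ih a c) (hApos c b)
  -- row sums of powers
  have hProw : ∀ (k : ℕ) (a : G ⧸ N), ∑ b : G ⧸ N, (A ^ k) a b = 1 := by
    intro k
    induction k with
    | zero => intro a; simp [Matrix.one_apply]
    | succ k ih =>
      intro a
      simp only [pow_succ, Matrix.mul_apply]
      rw [Finset.sum_comm]
      calc ∑ c : G ⧸ N, ∑ b : G ⧸ N, (A ^ k) a c * A c b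
          = ∑ c : G ⧸ N, (A ^ k) a c * ∑ b : G ⧸ N, A c b := by
            simp [Finset.mul_sum]
        _ = 1 := by simp only [hArow]; simpa using ih a
  -- walks give lower bounds on entries of powers
  have hPwalk : ∀ (L' : List G), (∀ g ∈ L', g ∈ S) → ∀ a : G ⧸ N,
      (1 / m) ^ L'.length ≤ (A ^ L'.length) a (a * QuotientGroup.mk L'.prod) := by
    intro L'
    induction L' with
    | nil => intro _ a; simp [Matrix.one_apply]
    | cons s T ih =>
      intro hmem a
      have hs : s ∈ S := hmem s List.mem_cons_self
      have hT : ∀ g ∈ T, g ∈ S := fun g hg => hmem g (List.mem_cons_of_mem s hg)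
      simp only [List.length_cons, List.prod_cons, pow_succ']
      rw [Matrix.mul_apply]
      have hkey : (1 / m) * (1 / m) ^ T.length ≤
          A a (a * QuotientGroup.mk s) *
          (A ^ T.length) (a * QuotientGroup.mk s) (a * QuotientGroup.mk (s * T.prod)) := by
        have h2 := ih hT (a * QuotientGroup.mk s)
        have heq : (a * QuotientGroup.mk s) * QuotientGroup.mk T.prod
            = a * QuotientGroup.mk (s * T.prod) := by
          rw [QuotientGroup.mk_mul, mul_assoc]
        rw [heq] at h2
        have h1 := hAstep a s hs
        have hnn : (0:ℝ) ≤ 1 / m := by positivity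
        exact mul_le_mul h1 h2 (by positivity) (hApos a _)
      calc (1 / m) * (1 / m) ^ T.length
          ≤ A a (a * QuotientGroup.mk s) *
            (A ^ T.length) (a * QuotientGroup.mk s) (a * QuotientGroup.mk (s * T.prod)) := hkey
        _ ≤ ∑ c : G ⧸ N, A a c * (A ^ T.length) c (a * QuotientGroup.mk (s * T.prod)) :=
            Finset.single_le_sum
              (fun c _ => mul_nonneg (hApos a c) (hPpos T.length c _))
              (Finset.mem_univ _)
  -- eigenvector relation for powers
  have heig' : ∀ z : G ⧸ N, ∑ y : G ⧸ N, A z y * v y = lam * v z := by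
    intro z
    have := heig z
    rwa [finsum_eq_sum_of_fintype] at this
  have hPv : ∀ (k : ℕ) (a : G ⧸ N), ∑ b : G ⧸ N, (A ^ k) a b * v b = lam ^ k * v a := by
    intro k
    induction k with
    | zero => intro a; simp [Matrix.one_apply]
    | succ k ih =>
      intro a
      simp only [pow_succ, Matrix.mul_apply]
      calc ∑ b : G ⧸ N, (∑ c : G ⧸ N, (A ^ k) a c * A c b) * v b
          = ∑ c : G ⧸ N, (A ^ k) a c * ∑ b : G ⧸ N, A c b * v b := by
            simp only [Finset.sum_mul, mul_assoc]
            rw [Finset.sum_comm]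
            simp only [← Finset.mul_sum]
        _ = ∑ c : G ⧸ N, (A ^ k) a c * (lam * v c) := by simp only [heig']
        _ = lam * (lam ^ k * v a) := by
            rw [← ih a, Finset.mul_sum]
            congr 1; ext c; ring
        _ = lam ^ k * lam * v a := by ring
  -- choose a vertex maximizing |v|
  obtain ⟨z, hz⟩ := Finite.exists_max (fun y : G ⧸ N => |v y|)
  have hvz : 0 < |v z| := by
    obtain ⟨y, hy⟩ := Function.ne_iff.mp hv
    exact lt_of_lt_of_le (abs_pos.mpr hy) (hz y)
  -- normalize sign
  set c : ℝ := if 0 < v z then 1 else -1 with hc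
  set w : G ⧸ N → ℝ := fun y => c * v y with hw
  have hwz : w z = |v z| := by
    rw [hw, hc]
    rcases lt_trichotomy (v z) 0 with h | h | h
    · rw [if_neg (by linarith), abs_of_neg h]; ring
    · exact absurd h (by simpa [abs_pos] using hvz.ne')
    · rw [if_pos h, abs_of_pos h]; ring
  have hwb : ∀ y : G ⧸ N, -w z ≤ w y := by
    intro y
    have h1 : |w y| = |v y| := by
      rw [hw, abs_mul, hc]
      rcases ite_eq_or_eq (0 < v z) (1:ℝ) (-1) with h | h <;> rw [h] <;> simp
    have := neg_abs_le (w y)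
    rw [h1] at this
    have h2 := hz y
    rw [hwz]; linarith
  have hwzpos : 0 < w z := by rw [hwz]; exact hvz
  -- eigen equation for w at power l
  have hPw : ∑ b : G ⧸ N, (A ^ l) z b * w b = lam ^ l * w z := by
    simp only [hw]
    calc ∑ b : G ⧸ N, (A ^ l) z b * (c * v b) = c * ∑ b : G ⧸ N, (A ^ l) z b * v b := by
          rw [Finset.mul_sum]; congr 1; ext b; ring
      _ = c * (lam ^ l * v z) := by rw [hPv l z]
      _ = lam ^ l * (c * v z) := by ring
  -- diagonal lower bound
  have hdiag : (1 / m) ^ l ≤ (A ^ l) z z := by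
    have := hPwalk L hLS z
    rw [hLlen, hLprod] at this
    simpa using this
  -- main estimate
  have hsum_erase : ∑ b ∈ Finset.univ.erase z, (A ^ l) z b = 1 - (A ^ l) z z := by
    have := Finset.add_sum_erase Finset.univ (fun b => (A ^ l) z b) (Finset.mem_univ z)
    rw [hProw l z] at this
    linarith
  have hlow : ∑ b ∈ Finset.univ.erase z, (A ^ l) z b * w b ≥
      (1 - (A ^ l) z z) * (-w z) := by
    rw [← hsum_erase, Finset.sum_mul]
    apply Finset.sum_le_sum
    intro b _
    exact mul_le_mul_of_nonneg_left (hwb b) (hPpos l z b)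
  have hsplit : lam ^ l * w z = (A ^ l) z z * w z
      + ∑ b ∈ Finset.univ.erase z, (A ^ l) z b * w b := by
    rw [← hPw, Finset.add_sum_erase Finset.univ (fun b => (A ^ l) z b * w b)
      (Finset.mem_univ z)]
  have hge : x ^ l * w z ≤ lam ^ l * w z := by
    rw [hsplit, hx]
    have h1 : (2 / m ^ l - 1) * w z ≤ (2 * (A ^ l) z z - 1) * w z := by
      apply mul_le_mul_of_nonneg_right _ hwzpos.le
      have : 1 / m ^ l ≤ (A ^ l) z z := by
        rw [← one_div_pow]; exact hdiag
      have h2 : 2 / m ^ l = 2 * (1 / m ^ l) := by ring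
      rw [h2]; linarith
    have h2 : (2 * (A ^ l) z z - 1) * w z =
        (A ^ l) z z * w z + (1 - (A ^ l) z z) * (-w z) := by ring
    calc (2 / m ^ l - 1) * w z ≤ (2 * (A ^ l) z z - 1) * w z := h1
      _ = (A ^ l) z z * w z + (1 - (A ^ l) z z) * (-w z) := h2
      _ ≤ (A ^ l) z z * w z + ∑ b ∈ Finset.univ.erase z, (A ^ l) z b * w b := by
          linarith [hlow]
  have hxl : x ^ l ≤ lam ^ l := le_of_mul_le_mul_right hge hwzpos
  exact (hodd.strictMono_pow (R := ℝ)).le_iff_le.mp hxl
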